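/- In the setting of the one-block expected capacity with g_K > 0, let Λ_k be defined by: Λ_k = ((n_{π_w}+1)/n_{π_s})·(F_{π_s}/F_{π_w}) for 1 ≤ k ≤ π_s; Λ_k = ((n_{π_w}+1)/(n_{π_m}-n_{π_{m-1}}))·((F_{π_m}-F_{π_{m-1}})/F_{π_w}) for π_{m-1} < k ≤ π_m, m = s+1,...,w; and Λ_k = 1 for π_w < k ≤ K. Then for every k = 1,...,K, (n_k+1)/(n_k Λ_k) ≤ 1/p_k. -/

import Mathlib

open Real

/-- Crossing point of the marginal utility functions `u_k` and `u_l`. -/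
noncomputable def zc (n F : ℕ → ℝ) (k l : ℕ) : ℝ :=
  (F k * n l - F l * n k) / (F l - F k)

set_option maxHeartbeats 1000000

lemma zc_le_iff (n F : ℕ → ℝ) (a b : ℕ) (h : F a < F b) (t : ℝ) :
    zc n F a b ≤ t ↔ F a * (n b + t) ≤ F b * (n a + t) := by
  unfold zc
  rw [div_le_iff₀ (by linarith)]
  constructor <;> intro h' <;> nlinarith [h']

lemma le_zc_iff (n F : ℕ → ℝ) (a b : ℕ) (h : F a < F b) (t : ℝ) :
    t ≤ zc n F a b ↔ F b * (n a + t) ≤ F a * (n b + t) := by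
  unfold zc
  rw [le_div_iff₀ (by linarith)]
  constructor <;> intro h' <;> nlinarith [h']

lemma clearedC (Fa Fj Fb na nj nb : ℝ) (hFa : 0 < Fa)
    (h : (Fa * nb - Fb * na) * (Fj - Fa) ≤ (Fa * nj - Fj * na) * (Fb - Fa)) :
    0 ≤ Fb * (nj - na) + Fa * (nb - nj) - Fj * (nb - na) := by
  have key : Fa * (Fb * (nj - na) + Fa * (nb - nj) - Fj * (nb - na)) =
      (Fa * nj - Fj * na) * (Fb - Fa) - (Fa * nb - Fb * na) * (Fj - Fa) := by ring
  by_contra hneg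
  push_neg at hneg
  nlinarith [mul_neg_of_pos_of_neg hFa hneg]

lemma X_lt (n F : ℕ → ℝ) (a j b : ℕ) (hFa : 0 < F a) (h1 : F a < F j) (h2 : F j < F b)
    (h : zc n F a b ≤ zc n F a j) : zc n F j b ≤ zc n F a b := by
  unfold zc at h ⊢
  rw [div_le_div_iff₀ (by linarith) (by linarith)] at h
  rw [div_le_div_iff₀ (by linarith) (by linarith)]
  have hC := clearedC (F a) (F j) (F b) (n a) (n j) (n b) hFa h
  nlinarith [mul_nonneg (by linarith : (0:ℝ) ≤ F b) hC]

lemma X_gt (n F : ℕ → ℝ) (a b j : ℕ) (hFa : 0 < F a) (h1 : F a < F b) (h2 : F b < F j)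
    (h : zc n F a b ≤ zc n F a j) : zc n F a b ≤ zc n F b j := by
  unfold zc at h ⊢
  rw [div_le_div_iff₀ (by linarith) (by linarith)] at h
  rw [div_le_div_iff₀ (by linarith) (by linarith)]
  have hC := clearedC (F a) (F j) (F b) (n a) (n j) (n b) hFa h
  nlinarith [mul_nonneg (by linarith : (0:ℝ) ≤ F b) hC]

/-- Key lemma for the worst-case additive gap: with `Λ_k` defined from the
active indices `σ_s, …, σ_w`, one has `(n_k+1)/(n_k Λ_k) ≤ 1/p_k` for every
`k = 1, …, K`. -/
theorem additive_gap_key_lemma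
    (K I s w : ℕ) (hK : 1 ≤ K) (n p : ℕ → ℝ)
    (hn1 : 0 < n 1)
    (hnmono : ∀ k l, 1 ≤ k → k < l → l ≤ K → n k < n l)
    (hp : ∀ k, 1 ≤ k → k ≤ K → 0 < p k)
    (hpsum : ∑ k ∈ Finset.Icc 1 K, p k = 1)
    (F : ℕ → ℝ) (hF : ∀ k, F k = ∑ j ∈ Finset.Icc 1 k, p j)
    (σ : ℕ → ℕ)
    (hI : 1 ≤ I) (hσ1 : σ 1 = 1) (hσI : σ I = K)
    (hσmono : ∀ i j, 1 ≤ i → i < j → j ≤ I → σ i < σ j)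
    (hmin : ∀ i, 1 ≤ i → i < I → ∀ l, σ i < l → l ≤ K →
      zc n F (σ i) (σ (i + 1)) ≤ zc n F (σ i) l)
    (hmax : ∀ i, 1 ≤ i → i < I → ∀ l, σ (i + 1) < l → l ≤ K →
      zc n F (σ i) (σ (i + 1)) < zc n F (σ i) l)
    (hs1 : 1 ≤ s) (hsI : s ≤ I)
    (hsle : s = 1 ∨ zc n F (σ (s - 1)) (σ s) ≤ 0)
    (hsmax : ∀ i, s < i → i ≤ I → 0 < zc n F (σ (i - 1)) (σ i))
    (hw1 : 1 ≤ w) (hwI : w ≤ I)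
    (hwlt : w = 1 ∨ zc n F (σ (w - 1)) (σ w) < 1)
    (hwmax : ∀ i, w < i → i ≤ I → 1 ≤ zc n F (σ (i - 1)) (σ i))
    (Λ : ℕ → ℝ)
    (hΛ1 : ∀ k, 1 ≤ k → k ≤ σ s →
      Λ k = (n (σ w) + 1) / n (σ s) * (F (σ s) / F (σ w)))
    (hΛ2 : ∀ m, s + 1 ≤ m → m ≤ w → ∀ k, σ (m - 1) < k → k ≤ σ m →
      Λ k = (n (σ w) + 1) / (n (σ m) - n (σ (m - 1))) *
        ((F (σ m) - F (σ (m - 1))) / F (σ w)))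
    (hΛ3 : ∀ k, σ w < k → k ≤ K → Λ k = 1) :
    ∀ k, 1 ≤ k → k ≤ K → (n k + 1) / (n k * Λ k) ≤ 1 / p k := by
  -- basic facts about F
  have hFsum : ∀ k, F k = ∑ j ∈ Finset.Ioc 0 k, p j := by
    intro k; rw [hF k]
    exact Finset.sum_congr (Finset.Icc_add_one_left_eq_Ioc 0 k) (fun x _ => rfl)
  have hFdiff : ∀ k l : ℕ, k ≤ l → F l - F k = ∑ j ∈ Finset.Ioc k l, p j := by
    intro k l hkl
    have h := Finset.sum_Ioc_consecutive p (Nat.zero_le k) hkl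
    rw [hFsum k, hFsum l]
    linarith [h]
  have hF0 : F 0 = 0 := by rw [hF]; simp
  have hFmono : ∀ k l : ℕ, k ≤ l → l ≤ K → F k ≤ F l := by
    intro k l hkl hlK
    have h := hFdiff k l hkl
    have h2 : 0 ≤ ∑ j ∈ Finset.Ioc k l, p j := by
      apply Finset.sum_nonneg
      intro j hj
      have hj' := Finset.mem_Ioc.mp hj
      exact (hp j (by omega) (by omega)).le
    linarith
  have hFstrict : ∀ k l : ℕ, k < l → l ≤ K → F k < F l := by
    intro k l hkl hlK
    have h := hFdiff k l hkl.le
    have h2 : 0 < ∑ j ∈ Finset.Ioc k l, p j := by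
      apply Finset.sum_pos
      · intro j hj
        have hj' := Finset.mem_Ioc.mp hj
        exact hp j (by omega) (by omega)
      · exact ⟨l, Finset.mem_Ioc.mpr ⟨hkl, le_rfl⟩⟩
    linarith
  have hFK : F K = 1 := by rw [hF]; exact hpsum
  have hFpos : ∀ k, 1 ≤ k → k ≤ K → 0 < F k := by
    intro k h1 h2
    have := hFstrict 0 k h1 h2
    linarith [hF0]
  have hFle1 : ∀ k, k ≤ K → F k ≤ 1 := by
    intro k h; rw [← hFK]; exact hFmono k K h le_rfl
  have hpkeq : ∀ k, 1 ≤ k → p k = F k - F (k - 1) := by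
    intro k h1
    have e : Finset.Ioc (k - 1) k = {k} := by
      ext x; simp only [Finset.mem_Ioc, Finset.mem_singleton]; omega
    rw [hFdiff (k - 1) k (by omega), e, Finset.sum_singleton]
  -- basic facts about n
  have hnpos : ∀ k, 1 ≤ k → k ≤ K → 0 < n k := by
    intro k h1 h2
    rcases eq_or_lt_of_le h1 with h | h
    · rw [← h]; exact hn1
    · exact lt_trans hn1 (hnmono 1 k le_rfl h h2)
  have hnle : ∀ k l, 1 ≤ k → k ≤ l → l ≤ K → n k ≤ n l := by
    intro k l h1 h2 h3
    rcases eq_or_lt_of_le h2 with h | h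
    · rw [h]
    · exact (hnmono k l h1 h h3).le
  -- basic facts about σ
  have hσge1 : ∀ i, 1 ≤ i → i ≤ I → 1 ≤ σ i := by
    intro i h1 h2
    rcases eq_or_lt_of_le h1 with h | h
    · rw [← h, hσ1]
    · have := hσmono 1 i le_rfl h h2; omega
  have hσleK : ∀ i, 1 ≤ i → i ≤ I → σ i ≤ K := by
    intro i h1 h2
    rcases eq_or_lt_of_le h2 with h | h
    · rw [h, hσI]
    · have := hσmono i I h1 h le_rfl; omega
  have hσle : ∀ i j, 1 ≤ i → i ≤ j → j ≤ I → σ i ≤ σ j := by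
    intro i j h1 h2 h3
    rcases eq_or_lt_of_le h2 with h | h
    · rw [h]
    · exact (hσmono i j h1 h h3).le
  -- s ≤ w
  have hsw : s ≤ w := by
    by_contra hcon
    push_neg at hcon
    have h1 := hwmax s hcon hsI
    rcases hsle with h2 | h2
    · omega
    · linarith
  -- chain monotonicity of crossing points
  have zstep : ∀ i, 2 ≤ i → i < I →
      zc n F (σ (i - 1)) (σ i) ≤ zc n F (σ i) (σ (i + 1)) := by
    intro i h2 hiI
    have h1 := hmin (i - 1) (by omega) (by omega) (σ (i + 1))
      (hσmono (i - 1) (i + 1) (by omega) (by omega) (by omega))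
      (hσleK (i + 1) (by omega) (by omega))
    rw [show i - 1 + 1 = i by omega] at h1
    exact X_gt n F (σ (i - 1)) (σ i) (σ (i + 1))
      (hFpos _ (hσge1 (i - 1) (by omega) (by omega)) (hσleK (i - 1) (by omega) (by omega)))
      (hFstrict _ _ (hσmono (i - 1) i (by omega) (by omega) (by omega))
        (hσleK i (by omega) (by omega)))
      (hFstrict _ _ (hσmono i (i + 1) (by omega) (by omega) (by omega))
        (hσleK (i + 1) (by omega) (by omega)))
      h1
  have zmono : ∀ j, 2 ≤ j → j ≤ I → ∀ i, 2 ≤ i → i ≤ j →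
      zc n F (σ (i - 1)) (σ i) ≤ zc n F (σ (j - 1)) (σ j) := by
    intro j
    induction j with
    | zero => omega
    | succ jm ih =>
      intro h2 hjI i hi2 hij
      rcases eq_or_lt_of_le hij with heq | hlt
      · rw [heq]
      · have hjm2 : 2 ≤ jm := by omega
        have ha := ih hjm2 (by omega) i hi2 (by omega)
        have hb := zstep jm hjm2 (by omega)
        simp only [Nat.add_sub_cancel]
        calc zc n F (σ (i - 1)) (σ i) ≤ zc n F (σ (jm - 1)) (σ jm) := ha
          _ ≤ zc n F (σ jm) (σ (jm + 1)) := hb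
  have zneg : ∀ i, 2 ≤ i → i ≤ s → zc n F (σ (i - 1)) (σ i) ≤ 0 := by
    intro i h2 his
    have hs2 : 2 ≤ s := by omega
    have h := zmono s hs2 hsI i h2 his
    rcases hsle with h1 | h1
    · omega
    · linarith
  -- chain at t = 0 up to σ s
  have chain0 : ∀ d m, 1 ≤ m → m + d = s → F (σ m) * n (σ s) ≤ F (σ s) * n (σ m) := by
    intro d
    induction d with
    | zero =>
      intro m h1 he
      have : m = s := by omega
      rw [this]
    | succ d ih =>
      intro m h1 he
      have hm1s : m + 1 ≤ s := by omega
      have prev := ih (m + 1) (by omega) (by omega)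
      have hz := zneg (m + 1) (by omega) hm1s
      simp only [Nat.add_sub_cancel] at hz
      have hFab : F (σ m) < F (σ (m + 1)) :=
        hFstrict _ _ (hσmono m (m + 1) h1 (by omega) (by omega))
          (hσleK (m + 1) (by omega) (by omega))
      have hstep := (zc_le_iff n F (σ m) (σ (m + 1)) hFab 0).mp hz
      simp only [add_zero] at hstep
      have p1 : 0 < n (σ (m + 1)) :=
        hnpos _ (hσge1 (m + 1) (by omega) (by omega)) (hσleK (m + 1) (by omega) (by omega))
      have p2 : 0 ≤ n (σ s) := (hnpos _ (hσge1 s hs1 hsI) (hσleK s hs1 hsI)).le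
      have p3 : 0 ≤ n (σ m) :=
        (hnpos _ (hσge1 m h1 (by omega)) (hσleK m h1 (by omega))).le
      have t1 := mul_le_mul_of_nonneg_right hstep p2
      have t2 := mul_le_mul_of_nonneg_right prev p3
      have big : (F (σ m) * n (σ s)) * n (σ (m + 1)) ≤ (F (σ s) * n (σ m)) * n (σ (m + 1)) := by
        nlinarith [t1, t2]
      exact le_of_mul_le_mul_right big p1
  -- Claim A
  have hA : ∀ k, 1 ≤ k → k ≤ σ s → F k * n (σ s) ≤ F (σ s) * n k := by
    intro k hk1 hks
    have hex : ∃ m, 1 ≤ m ∧ m ≤ s ∧ k ≤ σ m := ⟨s, hs1, le_rfl, hks⟩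
    obtain ⟨m, ⟨hm1, hms, hkm⟩, hminset⟩ :
        ∃ m, (1 ≤ m ∧ m ≤ s ∧ k ≤ σ m) ∧
          ∀ m', m' < m → ¬(1 ≤ m' ∧ m' ≤ s ∧ k ≤ σ m') :=
      ⟨Nat.find hex, Nat.find_spec hex, fun m' h => Nat.find_min hex h⟩
    rcases eq_or_lt_of_le hkm with heq | hlt
    · rw [heq]
      exact chain0 (s - m) m hm1 (by omega)
    · have hm2 : 2 ≤ m := by
        by_contra hcon
        have hmeq : m = 1 := by omega
        rw [hmeq, hσ1] at hlt
        omega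
      have hak : σ (m - 1) < k := by
        by_contra hcon
        push_neg at hcon
        exact hminset (m - 1) (by omega) ⟨by omega, by omega, hcon⟩
      have hkK' : k ≤ K := le_trans hks (hσleK s hs1 hsI)
      have hminh := hmin (m - 1) (by omega) (by omega) k hak hkK'
      rw [show m - 1 + 1 = m by omega] at hminh
      have hσmK : σ m ≤ K := hσleK m (by omega) (by omega)
      have hFa : 0 < F (σ (m - 1)) :=
        hFpos _ (hσge1 (m - 1) (by omega) (by omega)) (hσleK (m - 1) (by omega) (by omega))
      have hFak : F (σ (m - 1)) < F k := hFstrict _ k hak hkK'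
      have hFkb : F k < F (σ m) := hFstrict k (σ m) hlt hσmK
      have hx := X_lt n F (σ (m - 1)) k (σ m) hFa hFak hFkb hminh
      have hz := zneg m hm2 hms
      have hzk : zc n F k (σ m) ≤ 0 := le_trans hx hz
      have hstep := (zc_le_iff n F k (σ m) hFkb 0).mp hzk
      simp only [add_zero] at hstep
      have hch := chain0 (s - m) m (by omega) (by omega)
      have p1 : 0 < n (σ m) := hnpos _ (hσge1 m (by omega) (by omega)) hσmK
      have p2 : 0 ≤ n (σ s) := (hnpos _ (hσge1 s hs1 hsI) (hσleK s hs1 hsI)).le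
      have p3 : 0 ≤ n k := (hnpos k hk1 hkK').le
      have t1 := mul_le_mul_of_nonneg_right hstep p2
      have t2 := mul_le_mul_of_nonneg_right hch p3
      have big : (F k * n (σ s)) * n (σ m) ≤ (F (σ s) * n k) * n (σ m) := by
        nlinarith [t1, t2]
      exact le_of_mul_le_mul_right big p1
  -- conversion helper
  have conv : ∀ k, 1 ≤ k → k ≤ K → 0 < Λ k → p k * (n k + 1) ≤ n k * Λ k →
      (n k + 1) / (n k * Λ k) ≤ 1 / p k := by
    intro k h1 h2 hΛ hineq
    rw [div_le_div_iff₀ (mul_pos (hnpos k h1 h2) hΛ) (hp k h1 h2)]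
    nlinarith [hineq]
  -- global positivity data
  have hσwK : σ w ≤ K := hσleK w hw1 hwI
  have hσw1 : 1 ≤ σ w := hσge1 w hw1 hwI
  have hσsK : σ s ≤ K := hσleK s hs1 hsI
  have hσs1 : 1 ≤ σ s := hσge1 s hs1 hsI
  have hFσw : 0 < F (σ w) := hFpos _ hσw1 hσwK
  have hFσs : 0 < F (σ s) := hFpos _ hσs1 hσsK
  have hnσw : 0 < n (σ w) := hnpos _ hσw1 hσwK
  have hnσs : 0 < n (σ s) := hnpos _ hσs1 hσsK
  have hσsw : σ s ≤ σ w := hσle s w hs1 hsw hwI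
  have hFσw1 : F (σ w) ≤ 1 := hFle1 _ hσwK
  -- main proof
  intro k hk1 hkK
  have hpk_pos := hp k hk1 hkK
  have hnk_pos := hnpos k hk1 hkK
  have hFk_pos := hFpos k hk1 hkK
  have hFk1 : F k ≤ 1 := hFle1 k hkK
  have hFkm1 : 0 ≤ F (k - 1) := by
    have := hFmono 0 (k - 1) (Nat.zero_le _) (by omega)
    linarith [hF0]
  rcases le_or_gt k (σ s) with hcase1 | hcase1
  · -- Region 1 : k ≤ σ s
    have hΛval := hΛ1 k hk1 hcase1
    have hΛpos : 0 < Λ k := by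
      rw [hΛval]
      apply mul_pos (div_pos (by linarith) hnσs) (div_pos hFσs hFσw)
    apply conv k hk1 hkK hΛpos
    rw [hΛval]
    have e : n k * ((n (σ w) + 1) / n (σ s) * (F (σ s) / F (σ w))) =
        n k * ((n (σ w) + 1) * F (σ s)) / (n (σ s) * F (σ w)) := by
      ring
    rw [e, le_div_iff₀ (mul_pos hnσs hFσw)]
    have hAk := hA k hk1 hcase1
    have hpkF : p k ≤ F k := by
      rw [hpkeq k hk1]; linarith
    have hnkw : n k ≤ n (σ w) := hnle k (σ w) hk1 (le_trans hcase1 hσsw) hσwK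
    have c1 : p k * (n k + 1) * (n (σ s) * F (σ w)) ≤ F k * (n k + 1) * (n (σ s) * 1) := by
      have h1 : p k * (n k + 1) ≤ F k * (n k + 1) :=
        mul_le_mul_of_nonneg_right hpkF (by linarith)
      have h2 : n (σ s) * F (σ w) ≤ n (σ s) * 1 :=
        mul_le_mul_of_nonneg_left hFσw1 hnσs.le
      exact mul_le_mul h1 h2 (by positivity) (by positivity)
    have c3 : (F k * n (σ s)) * (n k + 1) ≤ (F (σ s) * n k) * (n k + 1) :=
      mul_le_mul_of_nonneg_right hAk (by linarith)
    have c4 : (F (σ s) * n k) * (n k + 1) ≤ (F (σ s) * n k) * (n (σ w) + 1) :=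
      mul_le_mul_of_nonneg_left (by linarith) (by positivity)
    linarith [c1, c3, c4]
  · rcases le_or_gt k (σ w) with hcase2 | hcase3
    · -- Region 2 : σ s < k ≤ σ w
      have hex : ∃ m, 1 ≤ m ∧ m ≤ w ∧ k ≤ σ m := ⟨w, hw1, le_rfl, hcase2⟩
      obtain ⟨m, ⟨hm1, hmw, hkm⟩, hminset⟩ :
          ∃ m, (1 ≤ m ∧ m ≤ w ∧ k ≤ σ m) ∧
            ∀ m', m' < m → ¬(1 ≤ m' ∧ m' ≤ w ∧ k ≤ σ m') :=
        ⟨Nat.find hex, Nat.find_spec hex, fun m' h => Nat.find_min hex h⟩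
      have hms : s < m := by
        by_contra hcon
        push_neg at hcon
        have := hσle m s hm1 hcon hsI
        omega
      have hak : σ (m - 1) < k := by
        by_contra hcon
        push_neg at hcon
        exact hminset (m - 1) (by omega) ⟨by omega, by omega, hcon⟩
      have hm1ge1 : 1 ≤ m - 1 := by omega
      have hmI : m ≤ I := le_trans hmw hwI
      have ha1 : 1 ≤ σ (m - 1) := hσge1 (m - 1) hm1ge1 (by omega)
      have haK : σ (m - 1) ≤ K := hσleK (m - 1) hm1ge1 (by omega)
      have hbK : σ m ≤ K := hσleK m hm1 hmI
      have hab : σ (m - 1) < σ m := hσmono (m - 1) m hm1ge1 (by omega) hmI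
      have hΛval := hΛ2 m (by omega) hmw k hak hkm
      have hFa : 0 < F (σ (m - 1)) := hFpos _ ha1 haK
      have hFab : F (σ (m - 1)) < F (σ m) := hFstrict _ _ hab hbK
      have hFak : F (σ (m - 1)) < F k := hFstrict _ k hak hkK
      have hnab : n (σ (m - 1)) < n (σ m) := hnmono _ _ ha1 hab hbK
      have hnak : n (σ (m - 1)) < n k := hnmono _ k ha1 hak hkK
      have hna : 0 < n (σ (m - 1)) := hnpos _ ha1 haK
      have hΛpos : 0 < Λ k := by
        rw [hΛval]
        apply mul_pos (div_pos (by linarith) (by linarith)) (div_pos (by linarith) hFσw)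
      apply conv k hk1 hkK hΛpos
      rw [hΛval]
      -- crossing point
      obtain ⟨za, hza⟩ : ∃ za, za = zc n F (σ (m - 1)) (σ m) := ⟨_, rfl⟩
      have hzpos : 0 < za := by rw [hza]; exact hsmax m hms hmI
      have hminh := hmin (m - 1) hm1ge1 (by omega) k hak hkK
      rw [show m - 1 + 1 = m by omega] at hminh
      rw [← hza] at hminh
      have H := (le_zc_iff n F (σ (m - 1)) k hFak za).mp hminh
      have hznum : za * (F (σ m) - F (σ (m - 1))) =
          F (σ (m - 1)) * n (σ m) - F (σ m) * n (σ (m - 1)) := by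
        rw [hza]
        unfold zc
        exact div_mul_cancel₀ _ (by linarith : F (σ m) - F (σ (m - 1)) ≠ 0)
      have zid : F (σ (m - 1)) * (n (σ m) + za) = F (σ m) * (n (σ (m - 1)) + za) := by
        nlinarith [hznum]
      have hposaz : 0 < n (σ (m - 1)) + za := by linarith
      -- derived chord inequality
      have e1 := mul_le_mul_of_nonneg_left H (by linarith : (0:ℝ) ≤ n (σ m) - n (σ (m - 1)))
      have zid2 : (n k - n (σ (m - 1))) * (F (σ (m - 1)) * (n (σ m) + za)) =
          (n k - n (σ (m - 1))) * (F (σ m) * (n (σ (m - 1)) + za)) := by rw [zid]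
      have hstep : ((F k - F (σ (m - 1))) * (n (σ m) - n (σ (m - 1)))) * (n (σ (m - 1)) + za) ≤
          ((F (σ m) - F (σ (m - 1))) * (n k - n (σ (m - 1)))) * (n (σ (m - 1)) + za) := by
        nlinarith [e1, zid2]
      have h4 : (F k - F (σ (m - 1))) * (n (σ m) - n (σ (m - 1))) ≤
          (F (σ m) - F (σ (m - 1))) * (n k - n (σ (m - 1))) :=
        le_of_mul_le_mul_right hstep hposaz
      -- final chain
      have hpk2 : p k ≤ F k - F (σ (m - 1)) := by
        rw [hpkeq k hk1]
        have : F (σ (m - 1)) ≤ F (k - 1) := hFmono _ (k - 1) (by omega) (by omega)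
        linarith
      have hnkw : n k ≤ n (σ w) := hnle k (σ w) hk1 hcase2 hσwK
      have e : n k * ((n (σ w) + 1) / (n (σ m) - n (σ (m - 1))) *
          ((F (σ m) - F (σ (m - 1))) / F (σ w))) =
          n k * ((n (σ w) + 1) * (F (σ m) - F (σ (m - 1)))) /
            ((n (σ m) - n (σ (m - 1))) * F (σ w)) := by
        rw [div_mul_div_comm, ← mul_div_assoc]
      rw [e, le_div_iff₀ (mul_pos
        (show (0:ℝ) < n (σ m) - n (σ (m - 1)) by linarith) hFσw)]
      have d1 : p k * (n k + 1) * ((n (σ m) - n (σ (m - 1))) * F (σ w)) ≤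
          (F k - F (σ (m - 1))) * (n k + 1) * ((n (σ m) - n (σ (m - 1))) * 1) := by
        have h1 : p k * (n k + 1) ≤ (F k - F (σ (m - 1))) * (n k + 1) :=
          mul_le_mul_of_nonneg_right hpk2 (by linarith)
        have h2 : (n (σ m) - n (σ (m - 1))) * F (σ w) ≤ (n (σ m) - n (σ (m - 1))) * 1 :=
          mul_le_mul_of_nonneg_left hFσw1 (by linarith)
        have h3 : (0:ℝ) ≤ (n (σ m) - n (σ (m - 1))) * F (σ w) := by nlinarith [mul_pos (show (0:ℝ) < n (σ m) - n (σ (m - 1)) by linarith) hFσw]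
        have h4 : (0:ℝ) ≤ (F k - F (σ (m - 1))) * (n k + 1) := by nlinarith
        exact mul_le_mul h1 h2 h3 h4
      have d3 : ((F k - F (σ (m - 1))) * (n (σ m) - n (σ (m - 1)))) * (n k + 1) ≤
          ((F (σ m) - F (σ (m - 1))) * (n k - n (σ (m - 1)))) * (n k + 1) :=
        mul_le_mul_of_nonneg_right h4 (by linarith)
      have d4 : ((F (σ m) - F (σ (m - 1))) * (n k - n (σ (m - 1)))) * (n k + 1) ≤
          ((F (σ m) - F (σ (m - 1))) * n k) * (n (σ w) + 1) := by
        have h1 : (F (σ m) - F (σ (m - 1))) * (n k - n (σ (m - 1))) ≤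
            (F (σ m) - F (σ (m - 1))) * n k :=
          mul_le_mul_of_nonneg_left (by linarith) (by linarith)
        have h2 : n k + 1 ≤ n (σ w) + 1 := by linarith
        have h3 : (0:ℝ) ≤ n k + 1 := by linarith
        have h4 : (0:ℝ) ≤ (F (σ m) - F (σ (m - 1))) * n k := by
          have := mul_pos (show (0:ℝ) < F (σ m) - F (σ (m - 1)) by linarith) hnk_pos
          linarith
        exact mul_le_mul h1 h2 h3 h4
      linarith [d1, d3, d4]
    · -- Region 3 : σ w < k
      have hΛval := hΛ3 k hcase3 hkK
      have hΛpos : 0 < Λ k := by rw [hΛval]; norm_num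
      apply conv k hk1 hkK hΛpos
      rw [hΛval]
      have hex : ∃ m, 1 ≤ m ∧ m ≤ I ∧ k ≤ σ m := ⟨I, hI, le_rfl, by rw [hσI]; exact hkK⟩
      obtain ⟨m, ⟨hm1, hmI, hkm⟩, hminset⟩ :
          ∃ m, (1 ≤ m ∧ m ≤ I ∧ k ≤ σ m) ∧
            ∀ m', m' < m → ¬(1 ≤ m' ∧ m' ≤ I ∧ k ≤ σ m') :=
        ⟨Nat.find hex, Nat.find_spec hex, fun m' h => Nat.find_min hex h⟩
      have hms : w < m := by
        by_contra hcon
        push_neg at hcon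
        have := hσle m w hm1 hcon hwI
        omega
      have hak : σ (m - 1) < k := by
        by_contra hcon
        push_neg at hcon
        exact hminset (m - 1) (by omega) ⟨by omega, by omega, hcon⟩
      have hm1ge1 : 1 ≤ m - 1 := by omega
      have ha1 : 1 ≤ σ (m - 1) := hσge1 (m - 1) hm1ge1 (by omega)
      have haK : σ (m - 1) ≤ K := hσleK (m - 1) hm1ge1 (by omega)
      have hFa : 0 < F (σ (m - 1)) := hFpos _ ha1 haK
      have hFak : F (σ (m - 1)) < F k := hFstrict _ k hak hkK
      have hnak : n (σ (m - 1)) < n k := hnmono _ k ha1 hak hkK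
      have hna : 0 < n (σ (m - 1)) := hnpos _ ha1 haK
      obtain ⟨za, hza⟩ : ∃ za, za = zc n F (σ (m - 1)) (σ m) := ⟨_, rfl⟩
      have hz1 : 1 ≤ za := by rw [hza]; exact hwmax m hms hmI
      have hminh := hmin (m - 1) hm1ge1 (by omega) k hak hkK
      rw [show m - 1 + 1 = m by omega] at hminh
      rw [← hza] at hminh
      have H := (le_zc_iff n F (σ (m - 1)) k hFak za).mp hminh
      have e2 : F (σ (m - 1)) * (za - 1) ≤ F k * (za - 1) :=
        mul_le_mul_of_nonneg_right hFak.le (by linarith)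
      have H1 : F k * (n (σ (m - 1)) + 1) ≤ F (σ (m - 1)) * (n k + 1) := by linarith [H, e2]
      have hpk2 : p k ≤ F k - F (σ (m - 1)) := by
        rw [hpkeq k hk1]
        have : F (σ (m - 1)) ≤ F (k - 1) := hFmono _ (k - 1) (by omega) (by omega)
        linarith
      rw [mul_one]
      by_cases hc : n (σ (m - 1)) + 1 ≤ F (σ (m - 1)) * (n k + 1)
      · have hpk1 : p k ≤ 1 - F (σ (m - 1)) := by linarith
        have := mul_le_mul_of_nonneg_right hpk1 (by linarith : (0:ℝ) ≤ n k + 1)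
        linarith [this, hc, hna]
      · push_neg at hc
        have s1' : p k * (n (σ (m - 1)) + 1) ≤ F (σ (m - 1)) * (n k - n (σ (m - 1))) := by
          have t0 := mul_le_mul_of_nonneg_right hpk2 (by linarith : (0:ℝ) ≤ n (σ (m - 1)) + 1)
          linarith [t0, H1]
        have t1 := mul_le_mul_of_nonneg_right s1' (by linarith : (0:ℝ) ≤ n k + 1)
        have t2 := mul_le_mul_of_nonneg_right hc.le (by linarith : (0:ℝ) ≤ n k - n (σ (m - 1)))
        have s2 : (p k * (n k + 1)) * (n (σ (m - 1)) + 1) ≤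
            (n k - n (σ (m - 1))) * (n (σ (m - 1)) + 1) := by linarith [t1, t2]
        have s3 : p k * (n k + 1) ≤ n k - n (σ (m - 1)) :=
          le_of_mul_le_mul_right s2 (by linarith)
        linarith
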